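/- Let $G$ be the graph obtained from the path $P_n$ (on vertices $x_1,\ldots,x_n$, $n \geq 2$) by attaching two pendant edges at each endpoint: $V(G) = \{x_1,\ldots,x_{n+4}\}$, $E(G) = E(P_n) \cup \{\{x_1,x_{n+1}\},\{x_1,x_{n+2}\},\{x_n,x_{n+3}\},\{x_n,x_{n+4}\}\}$. Then for $\mathfrak{c} = (1,\ldots,1) \in \mathbb{Z}_{>0}^{n+4}$, the set $\mathcal{W}(\mathfrak{c},G)$ does not enjoy the strong exchange property; in particular, $G$ does not enjoy the strong exchange property. -/

import Mathlib

open Finset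

/-- A monomial with exponent vector `a` belongs to the `q`-th power of the edge ideal of `G`:
it is divisible by a product of `q` edges of `G`. -/
def memPow {n : ℕ} (G : SimpleGraph (Fin n)) (q : ℕ) (a : Fin n → ℕ) : Prop :=
  ∃ e : Fin q → Fin n × Fin n, (∀ i, G.Adj (e i).1 (e i).2) ∧
    ∀ j, (∑ i, ((if (e i).1 = j then 1 else 0) + (if (e i).2 = j then 1 else 0))) ≤ a j

/-- The exponent vector `a` is componentwise bounded by `c`. -/
def bdd {n : ℕ} (c a : Fin n → ℕ) : Prop := ∀ i, a i ≤ c i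

/-- `δ_c(I(G))`: the largest `q` such that `(I(G)^q)_c ≠ 0`, i.e. such that some
`c`-bounded monomial lies in `I(G)^q`. -/
noncomputable def deltaC {n : ℕ} (G : SimpleGraph (Fin n)) (c : Fin n → ℕ) : ℕ :=
  sSup {q | ∃ a, bdd c a ∧ memPow G q a}

/-- `W(c,G)`: the minimal monomial generators of `(I(G)^{δ_c(I(G))})_c`, i.e. the
`c`-bounded monomials of `I(G)^{δ_c}` that are minimal with respect to divisibility. -/
def genW {n : ℕ} (G : SimpleGraph (Fin n)) (c : Fin n → ℕ) : Set (Fin n → ℕ) :=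
  {a | bdd c a ∧ memPow G (deltaC G c) a ∧
    ∀ b, bdd a b → memPow G (deltaC G c) b → b = a}

/-- The monomial `x_ρ · u / x_ξ`. -/
def exch {n : ℕ} (u : Fin n → ℕ) (ξ ρ : Fin n) : Fin n → ℕ :=
  fun i => if i = ρ then u i + 1 else if i = ξ then u i - 1 else u i

/-- `W(c,G)` enjoys the strong exchange property. -/
def SEPc {n : ℕ} (G : SimpleGraph (Fin n)) (c : Fin n → ℕ) : Prop :=
  ∀ u ∈ genW G c, ∀ v ∈ genW G c, ∀ ξ ρ : Fin n, v ξ < u ξ → u ρ < v ρ →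
    exch u ξ ρ ∈ genW G c

/-- The graph `G` enjoys the strong exchange property: `W(c,G)` does, for every
`c ∈ ℤ_{>0}^n`. -/
def SEP {n : ℕ} (G : SimpleGraph (Fin n)) : Prop :=
  ∀ c : Fin n → ℕ, (∀ i, 0 < c i) → SEPc G c

/-- The cycle graph on `Fin m`. -/
def cycleG (m : ℕ) : SimpleGraph (Fin m) :=
  SimpleGraph.fromRel (fun i j => (i.val + 1) % m = j.val)

/-- The path graph on `Fin m`. -/
def pathG (m : ℕ) : SimpleGraph (Fin m) :=
  SimpleGraph.fromRel (fun i j => i.val + 1 = j.val)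

/-- A set of monomials is of Veronese type: it equals `w · V^{(d)}(a)`, the set of
translates by a fixed monomial `w` of all monomials of degree `d` componentwise
bounded by `a`. -/
def IsVeronese {n : ℕ} (S : Set (Fin n → ℕ)) : Prop :=
  ∃ (w : Fin n → ℕ) (d : ℕ) (a : Fin n → ℕ), d ≤ ∑ i, a i ∧
    S = {u | ∃ v : Fin n → ℕ, (∀ i, v i ≤ a i) ∧ (∑ i, v i) = d ∧
      u = fun i => w i + v i}

/-- The graph on `Fin m` with edges given by a list of (0-based) pairs. -/
def listGraph (m : ℕ) (E : List (ℕ × ℕ)) : SimpleGraph (Fin m) :=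
  SimpleGraph.fromRel (fun i j => (i.val, j.val) ∈ E)

/-- The graph obtained from the path `P_n` (vertices `0,…,n-1`) by attaching two pendant
edges at each endpoint: pendant vertices `n, n+1` at `0` and `n+2, n+3` at `n-1`. -/
def G10 (n : ℕ) : SimpleGraph (Fin (n + 4)) :=
  SimpleGraph.fromRel (fun i j =>
    (i.val + 1 = j.val ∧ j.val < n) ∨
    (i.val = 0 ∧ (j.val = n ∨ j.val = n + 1)) ∨
    (i.val = n - 1 ∧ (j.val = n + 2 ∨ j.val = n + 3)))

namespace Stmt10Aux

/-- indicator of the support of our monomials, as a function of the value `j < n+4`: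
path part `{0,…,n-1}` minus the hole `n-2` when `n` is odd, plus pendants `a`, `b`. -/
def gg (n a b j : ℕ) : ℕ :=
  if (j < n ∧ ¬(n % 2 = 1 ∧ j = n - 2)) ∨ j = a ∨ j = b then 1 else 0

def uu (n a b : ℕ) : Fin (n+4) → ℕ := fun i => gg n a b i.val

/-- the explicit matching of size `n/2+1` hitting pendants `a` (at `0`) and `b` (at `n-1`). -/
def ee (n : ℕ) (a b : Fin (n+4)) (i : Fin (n/2+1)) : Fin (n+4) × Fin (n+4) :=
  if i.val = 0 then (⟨0, by omega⟩, a)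
  else if i.val = n/2 then (⟨n-1, by omega⟩, b)
  else (⟨2*i.val-1, by have := i.isLt; omega⟩, ⟨2*i.val, by have := i.isLt; omega⟩)

lemma g10_adj_val {n : ℕ} {x y : Fin (n+4)} (h : (G10 n).Adj x y) :
    x.val ≠ y.val ∧
    ((x.val + 1 = y.val ∧ y.val < n) ∨ (x.val = 0 ∧ (y.val = n ∨ y.val = n+1)) ∨
     (x.val = n-1 ∧ (y.val = n+2 ∨ y.val = n+3)) ∨
     (y.val + 1 = x.val ∧ x.val < n) ∨ (y.val = 0 ∧ (x.val = n ∨ x.val = n+1)) ∨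
     (y.val = n-1 ∧ (x.val = n+2 ∨ x.val = n+3))) := by
  rw [G10, SimpleGraph.fromRel_adj] at h
  obtain ⟨hne, h⟩ := h
  refine ⟨fun hv => hne (Fin.ext hv), ?_⟩
  tauto

lemma g10_adj_of {n : ℕ} {x y : Fin (n+4)}
    (h : (x.val + 1 = y.val ∧ y.val < n) ∨ (x.val = 0 ∧ (y.val = n ∨ y.val = n+1)) ∨
      (x.val = n-1 ∧ (y.val = n+2 ∨ y.val = n+3)))
    (hne : x.val ≠ y.val) : (G10 n).Adj x y := by
  rw [G10, SimpleGraph.fromRel_adj]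
  exact ⟨fun he => hne (congrArg Fin.val he), Or.inl h⟩

lemma sum_le_one' {q : ℕ} (f : Fin q → ℕ) (h1 : ∀ i, f i ≤ 1)
    (h2 : ∀ i j, f i ≠ 0 → f j ≠ 0 → i = j) : ∑ i, f i ≤ 1 := by
  by_cases h : ∀ i, f i = 0
  · simp [h]
  · push_neg at h
    obtain ⟨i0, hi0⟩ := h
    rw [Finset.sum_eq_single i0]
    · exact h1 i0
    · intro b _ hb
      by_contra hfb
      exact hb (h2 b i0 hfb hi0)
    · simp

lemma two_le_sum {q : ℕ} (f : Fin q → ℕ) {i i' : Fin q} (hne : i ≠ i')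
    (h1 : 1 ≤ f i) (h2 : 1 ≤ f i') : 2 ≤ ∑ k, f k := by
  calc 2 ≤ f i + f i' := by omega
  _ = ∑ k ∈ ({i, i'} : Finset _), f k := (Finset.sum_pair hne).symm
  _ ≤ ∑ k, f k := Finset.sum_le_sum_of_subset (Finset.subset_univ _)

lemma double_count {m q : ℕ} (e : Fin q → Fin m × Fin m) :
    ∑ j, (∑ i, ((if (e i).1 = j then 1 else 0) + (if (e i).2 = j then 1 else 0))) = 2*q := by
  rw [Finset.sum_comm]
  have h : ∀ i : Fin q, ∑ j, ((if (e i).1 = j then 1 else 0) + (if (e i).2 = j then 1 else 0)) = 2 := by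
    intro i
    rw [Finset.sum_add_distrib, Finset.sum_ite_eq, Finset.sum_ite_eq]
    simp
  simp [h, Finset.sum_const, mul_comm]

lemma sum_gg_le {n a b : ℕ} (hn : 2 ≤ n) (ha : n ≤ a) (hb : n ≤ b) (hab : a ≠ b) :
    ∑ j : Fin (n+4), gg n a b j.val ≤ 2*(n/2+1) := by
  rw [Fin.sum_univ_eq_sum_range (gg n a b) (n+4)]
  rw [Finset.sum_range_succ, Finset.sum_range_succ, Finset.sum_range_succ, Finset.sum_range_succ]
  have htail : gg n a b n + gg n a b (n+1) + gg n a b (n+2) + gg n a b (n+3) ≤ 2 := by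
    unfold gg; split_ifs <;> omega
  have hhead : ∑ j ∈ Finset.range n, gg n a b j ≤ n - n % 2 := by
    by_cases hpar : n % 2 = 1
    · have hmem : n - 2 ∈ Finset.range n := by simp; omega
      rw [← Finset.sum_erase_add _ _ hmem]
      have h0 : gg n a b (n-2) = 0 := by unfold gg; split_ifs <;> omega
      rw [h0, add_zero]
      calc ∑ j ∈ (Finset.range n).erase (n-2), gg n a b j
          ≤ ((Finset.range n).erase (n-2)).card • 1 :=
            Finset.sum_le_card_nsmul _ _ 1 (by intro x _; unfold gg; split_ifs <;> omega)
      _ = n - 1 := by rw [Finset.card_erase_of_mem hmem, Finset.card_range]; simp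
      _ ≤ n - n % 2 := by omega
    · calc ∑ j ∈ Finset.range n, gg n a b j ≤ (Finset.range n).card • 1 :=
          Finset.sum_le_card_nsmul _ _ 1 (by intro x _; unfold gg; split_ifs <;> omega)
      _ ≤ n - n % 2 := by rw [Finset.card_range, smul_eq_mul]; omega
  omega

lemma ee_cases (n : ℕ) (a b : Fin (n+4)) (i : Fin (n/2+1)) :
    ∃ x y : Fin (n+4), ee n a b i = (x, y) ∧
      ((i.val = 0 ∧ x.val = 0 ∧ y.val = a.val) ∨
       (i.val ≠ 0 ∧ i.val = n/2 ∧ x.val = n-1 ∧ y.val = b.val) ∨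
       (i.val ≠ 0 ∧ i.val ≠ n/2 ∧ x.val = 2*i.val-1 ∧ y.val = 2*i.val)) := by
  unfold ee
  split_ifs with h1 h2
  · exact ⟨_, _, rfl, Or.inl ⟨h1, rfl, rfl⟩⟩
  · exact ⟨_, _, rfl, Or.inr (Or.inl ⟨h1, h2, rfl, rfl⟩)⟩
  · exact ⟨_, _, rfl, Or.inr (Or.inr ⟨h1, h2, rfl, rfl⟩)⟩

end Stmt10Aux

namespace Stmt10Aux

lemma mem_pow_uu {n : ℕ} (hn : 2 ≤ n) {a b : Fin (n+4)}
    (ha : a.val = n ∨ a.val = n+1) (hb : b.val = n+2 ∨ b.val = n+3) :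
    memPow (G10 n) (n/2+1) (uu n a.val b.val) := by
  refine ⟨ee n a b, ?_, ?_⟩
  · intro i
    obtain ⟨x, y, hxy, hc⟩ := ee_cases n a b i
    rw [hxy]
    dsimp only
    have hlt := i.isLt
    apply g10_adj_of
    · rcases hc with ⟨h1, hx, hy⟩ | ⟨h1, h2, hx, hy⟩ | ⟨h1, h2, hx, hy⟩ <;> omega
    · rcases hc with ⟨h1, hx, hy⟩ | ⟨h1, h2, hx, hy⟩ | ⟨h1, h2, hx, hy⟩ <;> omega
  · intro j
    by_cases hcond : (j.val < n ∧ ¬(n % 2 = 1 ∧ j.val = n - 2)) ∨ j.val = a.val ∨ j.val = b.val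
    · have h1 : uu n a.val b.val j = 1 := by simp only [uu, gg]; rw [if_pos hcond]
      rw [h1]
      apply sum_le_one'
      · intro i
        obtain ⟨x, y, hxy, hc⟩ := ee_cases n a b i
        rw [hxy]
        have hlt := i.isLt
        have hne : x ≠ y := by
          intro h
          have hv := congrArg Fin.val h
          rcases hc with ⟨h1, hx, hy⟩ | ⟨h1, h2, hx, hy⟩ | ⟨h1, h2, hx, hy⟩ <;> omega
        split_ifs with p q
        · exact absurd (p.trans q.symm) hne
        all_goals omega
      · intro i i' hi hi'
        obtain ⟨x, y, hxy, hc⟩ := ee_cases n a b i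
        rw [hxy] at hi
        obtain ⟨x', y', hxy', hc'⟩ := ee_cases n a b i'
        rw [hxy'] at hi'
        have hji : x = j ∨ y = j := by
          by_contra hcon
          push_neg at hcon
          simp [hcon.1, hcon.2] at hi
        have hji' : x' = j ∨ y' = j := by
          by_contra hcon
          push_neg at hcon
          simp [hcon.1, hcon.2] at hi'
        have hv : x.val = j.val ∨ y.val = j.val := by
          rcases hji with h | h
          · exact Or.inl (congrArg Fin.val h)
          · exact Or.inr (congrArg Fin.val h)
        have hv' : x'.val = j.val ∨ y'.val = j.val := by
          rcases hji' with h | h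
          · exact Or.inl (congrArg Fin.val h)
          · exact Or.inr (congrArg Fin.val h)
        have hlt := i.isLt
        have hlt' := i'.isLt
        apply Fin.ext
        rcases hc with ⟨h1, hx, hy⟩ | ⟨h1, h2, hx, hy⟩ | ⟨h1, h2, hx, hy⟩ <;>
          rcases hc' with ⟨g1, gx, gy⟩ | ⟨g1, g2, gx, gy⟩ | ⟨g1, g2, gx, gy⟩ <;> omega
    · have h0 : uu n a.val b.val j = 0 := by simp only [uu, gg]; rw [if_neg hcond]
      rw [h0, Nat.le_zero]
      apply Finset.sum_eq_zero
      intro i _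
      obtain ⟨x, y, hxy, hc⟩ := ee_cases n a b i
      rw [hxy]
      have hlt := i.isLt
      have hx : x ≠ j := by
        intro h
        have hv := congrArg Fin.val h
        rcases hc with ⟨h1, hx, hy⟩ | ⟨h1, h2, hx, hy⟩ | ⟨h1, h2, hx, hy⟩ <;> omega
      have hy : y ≠ j := by
        intro h
        have hv := congrArg Fin.val h
        rcases hc with ⟨h1, hx, hy⟩ | ⟨h1, h2, hx, hy⟩ | ⟨h1, h2, hx, hy⟩ <;> omega
      rw [if_neg hx, if_neg hy]
      rfl

lemma matching_bound {n : ℕ} (hn : 2 ≤ n) {q : ℕ} {f : Fin (n+4) → ℕ}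
    (hb : bdd (fun _ => 1) f) (hm : memPow (G10 n) q f) : q ≤ n/2 + 1 := by
  obtain ⟨e, hadj, hcount⟩ := hm
  have hc1 : ∀ j : Fin (n+4),
      (∑ i, ((if (e i).1 = j then 1 else 0) + (if (e i).2 = j then 1 else 0))) ≤ 1 :=
    fun j => (hcount j).trans (hb j)
  have touch : ∀ (k : Fin q) (j : Fin (n+4)), (e k).1 = j ∨ (e k).2 = j →
      1 ≤ (if (e k).1 = j then 1 else 0) + (if (e k).2 = j then 1 else 0) := by
    intro k j h
    rcases h with h | h <;> simp [h]
  set cls : ℕ → ℕ → ℕ := fun x y =>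
    if x = 0 ∨ y = 0 then 0 else if x = n-1 ∨ y = n-1 then n/2 else (x+y+1)/4 with hcls
  have hlt : ∀ i : Fin q, cls (e i).1.val (e i).2.val < n/2+1 := by
    intro i
    have h := g10_adj_val (hadj i)
    simp only [hcls]
    split_ifs <;> omega
  have hinj : Function.Injective (fun i : Fin q => (⟨cls (e i).1.val (e i).2.val, hlt i⟩ : Fin (n/2+1))) := by
    intro i i' hphi
    by_contra hne
    have h := g10_adj_val (hadj i)
    have h' := g10_adj_val (hadj i')
    have hceq : cls (e i).1.val (e i).2.val = cls (e i').1.val (e i').2.val :=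
      congrArg Fin.val hphi
    have hv : (e i).1.val = (e i').1.val ∨ (e i).1.val = (e i').2.val ∨
        (e i).2.val = (e i').1.val ∨ (e i).2.val = (e i').2.val := by
      simp only [hcls] at hceq
      split_ifs at hceq <;> omega
    have key : ∀ j : Fin (n+4), ((e i).1 = j ∨ (e i).2 = j) → ((e i').1 = j ∨ (e i').2 = j) → False := by
      intro j h1 h2
      have h3 := two_le_sum (f := fun k => (if (e k).1 = j then 1 else 0) + (if (e k).2 = j then 1 else 0))
        hne (touch i j h1) (touch i' j h2)
      have h4 := hc1 j
      omega
    rcases hv with hv | hv | hv | hv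
    · exact key (e i').1 (Or.inl (Fin.ext hv)) (Or.inl rfl)
    · exact key (e i').2 (Or.inl (Fin.ext hv)) (Or.inr rfl)
    · exact key (e i').1 (Or.inr (Fin.ext hv)) (Or.inl rfl)
    · exact key (e i').2 (Or.inr (Fin.ext hv)) (Or.inr rfl)
  have := Fintype.card_le_of_injective _ hinj
  simpa using this

end Stmt10Aux

namespace Stmt10Aux

lemma delta_eq {n : ℕ} (hn : 2 ≤ n) : deltaC (G10 n) (fun _ => 1) = n/2 + 1 := by
  have hbdd : bdd (fun _ => (1:ℕ)) (uu n n (n+2)) := by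
    intro i
    simp only [uu, gg]
    split_ifs <;> omega
  have hmemS : (n/2+1) ∈ {q | ∃ a, bdd (fun _ => (1:ℕ)) a ∧ memPow (G10 n) q a} := by
    refine ⟨uu n n (n+2), hbdd, ?_⟩
    have := mem_pow_uu hn (a := ⟨n, by omega⟩) (b := ⟨n+2, by omega⟩) (Or.inl rfl) (Or.inl rfl)
    exact this
  have hub : ∀ q ∈ {q | ∃ a, bdd (fun _ => (1:ℕ)) a ∧ memPow (G10 n) q a}, q ≤ n/2+1 := by
    rintro q ⟨f, hf, hm⟩
    exact matching_bound hn hf hm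
  unfold deltaC
  exact le_antisymm (csSup_le ⟨_, hmemS⟩ hub) (le_csSup ⟨n/2+1, fun q hq => hub q hq⟩ hmemS)

lemma w_mem {n : ℕ} (hn : 2 ≤ n) {a b : Fin (n+4)}
    (ha : a.val = n ∨ a.val = n+1) (hb : b.val = n+2 ∨ b.val = n+3) :
    uu n a.val b.val ∈ genW (G10 n) (fun _ => 1) := by
  refine ⟨?_, ?_, ?_⟩
  · intro i
    simp only [uu, gg]
    split_ifs <;> omega
  · rw [delta_eq hn]
    exact mem_pow_uu hn ha hb
  · intro bb hbb hmem
    rw [delta_eq hn] at hmem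
    obtain ⟨e, _, hcount⟩ := hmem
    have hdc := double_count e
    have hle1 : (2*(n/2+1) : ℕ) ≤ ∑ j, bb j := by
      rw [← hdc]
      exact Finset.sum_le_sum (fun j _ => hcount j)
    have hle2 : ∑ j, bb j ≤ ∑ j, uu n a.val b.val j :=
      Finset.sum_le_sum (fun j _ => hbb j)
    have hsu : ∑ j : Fin (n+4), uu n a.val b.val j ≤ 2*(n/2+1) :=
      sum_gg_le hn (by omega) (by omega) (by omega)
    have hsum_eq : ∑ j, bb j = ∑ j, uu n a.val b.val j := by omega
    funext j
    by_contra hne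
    have hlt : bb j < uu n a.val b.val j := lt_of_le_of_ne (hbb j) hne
    have := Finset.sum_lt_sum (fun k (_ : k ∈ Finset.univ) => hbb k) ⟨j, Finset.mem_univ _, hlt⟩
    omega

lemma not_mem_w {n : ℕ} (hn : 2 ≤ n) : ¬ memPow (G10 n) (n/2+1) (uu n (n+2) (n+3)) := by
  rintro ⟨e, hadj, hcount⟩
  have hdc := double_count e
  have hsum : ∑ j : Fin (n+4), uu n (n+2) (n+3) j ≤ 2*(n/2+1) :=
    sum_gg_le hn (by omega) (by omega) (by omega)
  have hle : (∑ j, (∑ i, ((if (e i).1 = j then 1 else 0) + (if (e i).2 = j then 1 else 0))))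
      ≤ ∑ j, uu n (n+2) (n+3) j := Finset.sum_le_sum (fun j _ => hcount j)
  have heq : ∀ j, (∑ i, ((if (e i).1 = j then 1 else 0) + (if (e i).2 = j then 1 else 0)))
      = uu n (n+2) (n+3) j := by
    intro j
    by_contra hne
    have hlt : (∑ i, ((if (e i).1 = j then 1 else 0) + (if (e i).2 = j then 1 else 0)))
        < uu n (n+2) (n+3) j := lt_of_le_of_ne (hcount j) hne
    have := Finset.sum_lt_sum (fun k (_ : k ∈ Finset.univ) => hcount k) ⟨j, Finset.mem_univ _, hlt⟩
    omega
  -- find the edge covering the pendant n+2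
  have hfind : ∀ j : Fin (n+4), uu n (n+2) (n+3) j = 1 →
      ∃ i, (e i).1 = j ∨ (e i).2 = j := by
    intro j hj
    by_contra hcon
    push_neg at hcon
    have : (∑ i, ((if (e i).1 = j then 1 else 0) + (if (e i).2 = j then 1 else 0))) = 0 := by
      apply Finset.sum_eq_zero
      intro i _
      rw [if_neg (hcon i).1, if_neg (hcon i).2]
      rfl
    rw [heq j, hj] at this
    omega
  have hu2 : uu n (n+2) (n+3) ⟨n+2, by omega⟩ = 1 := by
    show gg n (n+2) (n+3) (n+2) = 1
    unfold gg
    rw [if_pos (by omega)]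
  have hu3 : uu n (n+2) (n+3) ⟨n+3, by omega⟩ = 1 := by
    show gg n (n+2) (n+3) (n+3) = 1
    unfold gg
    rw [if_pos (by omega)]
  obtain ⟨i2, hi2⟩ := hfind _ hu2
  obtain ⟨i3, hi3⟩ := hfind _ hu3
  have touch : ∀ (k : Fin (n/2+1)) (j : Fin (n+4)), (e k).1 = j ∨ (e k).2 = j →
      1 ≤ (if (e k).1 = j then 1 else 0) + (if (e k).2 = j then 1 else 0) := by
    intro k j h
    rcases h with h | h <;> simp [h]
  have hv2 : (e i2).1.val = n+2 ∨ (e i2).2.val = n+2 := by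
    rcases hi2 with h | h
    · exact Or.inl (congrArg Fin.val h)
    · exact Or.inr (congrArg Fin.val h)
  have hv3 : (e i3).1.val = n+3 ∨ (e i3).2.val = n+3 := by
    rcases hi3 with h | h
    · exact Or.inl (congrArg Fin.val h)
    · exact Or.inr (congrArg Fin.val h)
  have ho2 : (e i2).1.val = n-1 ∨ (e i2).2.val = n-1 := by
    have h := g10_adj_val (hadj i2)
    omega
  have ho3 : (e i3).1.val = n-1 ∨ (e i3).2.val = n-1 := by
    have h := g10_adj_val (hadj i3)
    omega
  have hne : i2 ≠ i3 := by
    intro hE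
    rw [hE] at hv2
    have h := g10_adj_val (hadj i3)
    omega
  set j1 : Fin (n+4) := ⟨n-1, by omega⟩ with hj1
  have hu1 : uu n (n+2) (n+3) j1 = 1 := by
    show gg n (n+2) (n+3) (n-1) = 1
    unfold gg
    rw [if_pos (by omega)]
  have t2 : (e i2).1 = j1 ∨ (e i2).2 = j1 := by
    rcases ho2 with h | h
    · exact Or.inl (Fin.ext h)
    · exact Or.inr (Fin.ext h)
  have t3 : (e i3).1 = j1 ∨ (e i3).2 = j1 := by
    rcases ho3 with h | h
    · exact Or.inl (Fin.ext h)
    · exact Or.inr (Fin.ext h)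
  have h2s := two_le_sum (f := fun k => (if (e k).1 = j1 then 1 else 0) + (if (e k).2 = j1 then 1 else 0))
    hne (touch i2 j1 t2) (touch i3 j1 t3)
  have hfin := heq j1
  rw [hu1] at hfin
  omega

end Stmt10Aux

open Stmt10Aux

/-- For `n ≥ 2` and `c = (1,…,1)`, `W(c, G10 n)` does not enjoy the strong
exchange property; in particular `G10 n` does not enjoy the strong exchange property. -/
theorem stmt10 (n : ℕ) (hn : 2 ≤ n) :
    ¬ SEPc (G10 n) (fun _ => 1) ∧ ¬ SEP (G10 n) := by
  have key : ¬ SEPc (G10 n) (fun _ => 1) := by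
    intro h
    have hu := w_mem hn (a := ⟨n, by omega⟩) (b := ⟨n+2, by omega⟩) (Or.inl rfl) (Or.inl rfl)
    have hv := w_mem hn (a := ⟨n+1, by omega⟩) (b := ⟨n+3, by omega⟩) (Or.inr rfl) (Or.inr rfl)
    have hlt1 : uu n (n+1) (n+3) (⟨n, by omega⟩ : Fin (n+4)) < uu n n (n+2) (⟨n, by omega⟩ : Fin (n+4)) := by
      show gg n (n+1) (n+3) n < gg n n (n+2) n
      unfold gg
      split_ifs <;> omega
    have hlt2 : uu n n (n+2) (⟨n+3, by omega⟩ : Fin (n+4)) < uu n (n+1) (n+3) (⟨n+3, by omega⟩ : Fin (n+4)) := by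
      show gg n n (n+2) (n+3) < gg n (n+1) (n+3) (n+3)
      unfold gg
      split_ifs <;> omega
    have hx := h _ hu _ hv ⟨n, by omega⟩ ⟨n+3, by omega⟩ hlt1 hlt2
    have hex : exch (uu n n (n+2)) (⟨n, by omega⟩ : Fin (n+4)) (⟨n+3, by omega⟩ : Fin (n+4))
        = uu n (n+2) (n+3) := by
      funext j
      simp only [exch, uu, gg, Fin.ext_iff]
      split_ifs <;> omega
    rw [hex] at hx
    have hmem := hx.2.1
    rw [delta_eq hn] at hmem
    exact not_mem_w hn hmem
  exact ⟨key, fun h => key (h _ (fun _ => one_pos))⟩
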